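/- Let μ be an atomless probability measure on ℝ with cumulative distribution function F, and let N ≤ n be positive integers. Let max_N : ℝ^n → ℝ^N denote the map sending a vector to the vector of its N largest coordinates (counted with multiplicity) arranged in decreasing order. Then the pushforward of the product measure μ^{⊗n} under max_N is absolutely continuous with respect to μ^{⊗N}, with density (t_1, …, t_N) ↦ (n!/(n−N)!) · 1_{t_1 ≥ ⋯ ≥ t_N} · F(t_N)^{n−N}. -/

import Mathlib

set_option linter.unusedSectionVars false
set_option maxHeartbeats 1000000

open MeasureTheory
open scoped ENNReal

/-- The cumulative distribution function of a measure on `ℝ`. -/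
noncomputable def cdf' (μ : Measure ℝ) : ℝ → ℝ := fun x => (μ (Set.Iic x)).toReal

noncomputable def maxN (N n : ℕ) (h : N ≤ n) (x : Fin n → ℝ) : Fin N → ℝ :=
  fun i => x (Tuple.sort x ⟨n - 1 - (i : ℕ), by omega⟩)

variable {N n : ℕ}

/-- L1: characterization of `maxN x i ≤ c`. -/
lemma maxN_le_iff (h : N ≤ n) (x : Fin n → ℝ) (i : Fin N) (c : ℝ) :
    maxN N n h x i ≤ c ↔ (Finset.univ.filter fun j => c < x j).card ≤ (i : ℕ) := by
  have hN : 0 < N := i.pos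
  set σ := Tuple.sort x with hσ
  set y : Fin n → ℝ := x ∘ σ with hy
  have hmono : Monotone y := Tuple.monotone_sort x
  have hin : (n : ℕ) - 1 - (i : ℕ) < n := by omega
  have hcard : (Finset.univ.filter fun j => c < x j).card
      = (Finset.univ.filter fun j => c < y j).card := by
    apply Finset.card_bij (fun j _ => σ.symm j)
    · intro a ha
      simp only [Finset.mem_filter, Finset.mem_univ, true_and, hy, Function.comp] at ha ⊢
      simpa using ha
    · intro a _ b _ hab
      exact σ.symm.injective hab
    · intro b hb
      refine ⟨σ b, ?_, by simp⟩
      simp only [Finset.mem_filter, Finset.mem_univ, true_and, hy, Function.comp] at hb ⊢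
      exact hb
  rw [hcard]
  have hmx : maxN N n h x i = y ⟨n - 1 - (i : ℕ), hin⟩ := rfl
  rw [hmx]
  constructor
  · intro hle
    have hsub : (Finset.univ.filter fun j => c < y j) ⊆ Finset.Ioi ⟨n - 1 - (i : ℕ), hin⟩ := by
      intro j hj
      simp only [Finset.mem_filter, Finset.mem_univ, true_and] at hj
      rw [Finset.mem_Ioi]
      by_contra hc
      push_neg at hc
      exact absurd ((hmono hc).trans hle) (not_le.mpr hj)
    calc (Finset.univ.filter fun j => c < y j).card ≤ _ := Finset.card_le_card hsub
      _ = n - 1 - (n - 1 - (i : ℕ)) := Fin.card_Ioi _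
      _ ≤ (i : ℕ) := by omega
  · intro hle
    by_contra hc
    push_neg at hc
    have hsub : Finset.Ici (⟨n - 1 - (i : ℕ), hin⟩ : Fin n)
        ⊆ Finset.univ.filter fun j => c < y j := by
      intro j hj
      rw [Finset.mem_Ici] at hj
      simp only [Finset.mem_filter, Finset.mem_univ, true_and]
      exact lt_of_lt_of_le hc (hmono hj)
    have := (Fin.card_Ici (⟨n - 1 - (i : ℕ), hin⟩ : Fin n)) ▸ Finset.card_le_card hsub
    simp only [Fin.val_mk] at this
    omega

/-- L2: `maxN` is symmetric. -/
lemma maxN_comp_perm (h : N ≤ n) (x : Fin n → ℝ) (σ : Equiv.Perm (Fin n)) :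
    maxN N n h (x ∘ σ) = maxN N n h x := by
  funext i
  have := congrFun (Tuple.comp_perm_comp_sort_eq_comp_sort (f := x) (σ := σ))
    ⟨n - 1 - (i : ℕ), by have := i.pos; omega⟩
  exact this

/-- L3: `maxN` is measurable. -/
lemma measurable_maxN (h : N ≤ n) : Measurable (maxN N n h) := by
  rw [measurable_pi_iff]
  intro i
  apply measurable_of_Iic
  intro c
  show MeasurableSet ((fun x => maxN N n h x i) ⁻¹' Set.Iic c)
  have h2 : (fun x => maxN N n h x i) ⁻¹' Set.Iic c
      = {x : Fin n → ℝ | (Finset.univ.filter fun j => c < x j).card ≤ (i : ℕ)} := by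
    ext x
    simp only [Set.mem_preimage, Set.mem_Iic, Set.mem_setOf_eq]
    exact maxN_le_iff h x i c
  rw [h2]
  have hm : Measurable fun x : Fin n → ℝ => (Finset.univ.filter fun j => c < x j).card := by
    simp_rw [Finset.card_filter]
    apply Finset.measurable_sum
    intro j _
    exact Measurable.ite (measurableSet_lt measurable_const (measurable_pi_apply j))
      measurable_const measurable_const
  exact hm measurableSet_Iic

/-- L4: on strictly decreasing vectors, `maxN` is the restriction to initial coordinates. -/
lemma maxN_of_strictAnti (h : N ≤ n) {x : Fin n → ℝ} (hx : StrictAnti x) (i : Fin N) :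
    maxN N n h x i = x ⟨(i : ℕ), lt_of_lt_of_le i.isLt h⟩ := by
  have hrev : Monotone (x ∘ Fin.revPerm) := by
    have : StrictMono (x ∘ (Fin.rev : Fin n → Fin n)) :=
      hx.comp (fun a b hab => Fin.rev_lt_rev.mpr hab)
    exact this.monotone
  have huniq : x ∘ (Tuple.sort x) = x ∘ Fin.revPerm :=
    Tuple.unique_monotone (Tuple.monotone_sort x) hrev
  have hN := i.pos
  have : maxN N n h x i = (x ∘ Tuple.sort x) ⟨n - 1 - (i : ℕ), by omega⟩ := rfl
  rw [this, huniq]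
  show x (Fin.rev _) = _
  congr 1
  ext
  rw [Fin.val_rev]
  simp only [Fin.val_mk]
  omega

section perm
variable {μ : Measure ℝ} [IsProbabilityMeasure μ] [NullSingletonClass μ]

/-- precomposition with a permutation preserves the product measure -/
lemma perm_measurePreserving (m : ℕ) (σ : Equiv.Perm (Fin m)) :
    MeasurePreserving (fun x : Fin m → ℝ => x ∘ σ)
      (Measure.pi fun _ : Fin m => μ) (Measure.pi fun _ : Fin m => μ) := by
  have := measurePreserving_piCongrLeft (fun _ : Fin m => μ) σ.symm
  convert this using 1
  funext x
  funext i
  simp [MeasurableEquiv.piCongrLeft, Equiv.piCongrLeft, Equiv.piCongrLeft']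


/-- a.e. vector has pairwise distinct coordinates -/
lemma ae_injective_pi (m : ℕ) :
    ∀ᵐ x ∂(Measure.pi fun _ : Fin m => μ), Function.Injective x := by
  have hnull : ∀ i j : Fin m, i ≠ j →
      (Measure.pi fun _ : Fin m => μ) {x | x i = x j} = 0 := by
    intro i j hij
    classical
    have hmp := measurePreserving_piEquivPiSubtypeProd (fun _ : Fin m => μ) (· = i)
    set s' : Set (({k : Fin m // k = i} → ℝ) × ({k : Fin m // ¬ k = i} → ℝ)) :=
      {p | p.1 ⟨i, rfl⟩ = p.2 ⟨j, fun hc => hij hc.symm⟩} with hs'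
    have hms' : MeasurableSet s' := by
      apply measurableSet_eq_fun
      · exact (measurable_pi_apply _).comp measurable_fst
      · exact (measurable_pi_apply _).comp measurable_snd
    have hpre : {x : Fin m → ℝ | x i = x j}
        = ⇑(MeasurableEquiv.piEquivPiSubtypeProd (fun _ : Fin m => ℝ) (· = i)) ⁻¹' s' := rfl
    rw [hpre, hmp.measure_preimage hms'.nullMeasurableSet, Measure.prod_apply hms']
    have h0 : ∀ a : {k : Fin m // k = i} → ℝ,
        (Measure.pi fun _ : {k : Fin m // ¬ k = i} => μ) (Prod.mk a ⁻¹' s') = 0 := by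
      intro a
      have heq : Prod.mk a ⁻¹' s' = {b : {k : Fin m // ¬ k = i} → ℝ |
          b ⟨j, fun hc => hij hc.symm⟩ = a ⟨i, rfl⟩} := by
        ext b; simp [hs', eq_comm]
      rw [heq]
      exact Measure.pi_hyperplane _ _ _
    simp [h0]
  have : ∀ᵐ x ∂(Measure.pi fun _ : Fin m => μ), ∀ i j : Fin m, i ≠ j → x i ≠ x j := by
    rw [ae_all_iff]
    intro i
    rw [ae_all_iff]
    intro j
    rcases eq_or_ne i j with rfl | hij
    · simp
    · refine ae_iff.mpr ?_
      simp only [hij, ne_eq, not_forall, not_not, exists_prop, true_and]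
      simpa using hnull i j hij
  filter_upwards [this] with x hx
  intro a b hab
  by_contra hne
  exact hx a b hne hab

/-- for injective `x` there is a unique permutation sorting it in decreasing order -/
lemma existsUnique_strictAnti_perm {m : ℕ} {x : Fin m → ℝ} (hx : Function.Injective x) :
    ∃! σ : Equiv.Perm (Fin m), StrictAnti (x ∘ σ) := by
  have hrev : StrictAnti (Fin.rev : Fin m → Fin m) := fun a b hab => Fin.rev_lt_rev.mpr hab
  refine ⟨Fin.revPerm.trans (Tuple.sort x), ?_, ?_⟩
  · have hmono : Monotone (x ∘ Tuple.sort x) := Tuple.monotone_sort x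
    have hsm : StrictMono (x ∘ Tuple.sort x) :=
      hmono.strictMono_of_injective (hx.comp (Tuple.sort x).injective)
    intro a b hab
    exact hsm (hrev hab)
  · intro τ hτ
    -- uniqueness
    have key : ∀ σ₁ σ₂ : Equiv.Perm (Fin m), StrictAnti (x ∘ σ₁) → StrictAnti (x ∘ σ₂) →
        σ₁ = σ₂ := by
      intro σ₁ σ₂ h1 h2
      have m1 : Monotone (x ∘ (Fin.revPerm.trans σ₁)) := by
        have : StrictMono ((x ∘ σ₁) ∘ (Fin.rev : Fin m → Fin m)) := h1.comp hrev
        exact this.monotone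
      have m2 : Monotone (x ∘ (Fin.revPerm.trans σ₂)) := by
        have : StrictMono ((x ∘ σ₂) ∘ (Fin.rev : Fin m → Fin m)) := h2.comp hrev
        exact this.monotone
      have := Tuple.unique_monotone m1 m2
      ext i
      have h2' := congrFun this (Fin.rev i)
      simp only [Function.comp, Equiv.trans_apply, Fin.revPerm_apply, Fin.rev_rev] at h2'
      exact congrArg Fin.val (hx h2')
    exact key τ _ hτ (by
      have hmono : Monotone (x ∘ Tuple.sort x) := Tuple.monotone_sort x
      have hsm : StrictMono (x ∘ Tuple.sort x) :=
        hmono.strictMono_of_injective (hx.comp (Tuple.sort x).injective)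
      intro a b hab
      exact hsm (hrev hab))

lemma measurableSet_strictAnti_chamber {m : ℕ} (σ : Equiv.Perm (Fin m)) :
    MeasurableSet {x : Fin m → ℝ | StrictAnti (x ∘ σ)} := by
  have : {x : Fin m → ℝ | StrictAnti (x ∘ σ)}
      = ⋂ (i : Fin m), ⋂ (j : Fin m), ⋂ (_ : i < j), {x | x (σ j) < x (σ i)} := by
    ext x
    simp only [Set.mem_setOf_eq, Set.mem_iInter]
    exact ⟨fun hx i j hij => hx hij, fun hx a b hab => hx a b hab⟩
  rw [this]
  exact MeasurableSet.iInter fun i => MeasurableSet.iInter fun j =>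
    MeasurableSet.iInter fun _ => measurableSet_lt (measurable_pi_apply _) (measurable_pi_apply _)

/-- **Symmetrization.** -/
lemma lintegral_eq_factorial_mul_strictAnti (m : ℕ) (f : (Fin m → ℝ) → ℝ≥0∞)
    (hf : Measurable f) (hsym : ∀ (σ : Equiv.Perm (Fin m)) (x : Fin m → ℝ), f (x ∘ σ) = f x) :
    ∫⁻ x, f x ∂(Measure.pi fun _ : Fin m => μ)
      = m.factorial * ∫⁻ x, {y : Fin m → ℝ | StrictAnti y}.indicator f x
          ∂(Measure.pi fun _ : Fin m => μ) := by
  classical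
  have hae : ∀ᵐ x ∂(Measure.pi fun _ : Fin m => μ),
      f x = ∑ σ : Equiv.Perm (Fin m), {y : Fin m → ℝ | StrictAnti (y ∘ σ)}.indicator f x := by
    filter_upwards [ae_injective_pi (μ := μ) m] with x hx
    obtain ⟨σ₀, hσ₀, huniq⟩ := existsUnique_strictAnti_perm hx
    rw [Finset.sum_eq_single σ₀]
    · simp [Set.indicator_of_mem, hσ₀, Set.mem_setOf_eq]
    · intro σ _ hσ
      apply Set.indicator_of_notMem
      intro hmem
      exact hσ (huniq σ hmem)
    · intro habs
      exact absurd (Finset.mem_univ σ₀) habs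
  rw [lintegral_congr_ae hae, lintegral_finset_sum]
  swap
  · intro σ _
    exact hf.indicator (measurableSet_strictAnti_chamber σ)
  have hterm : ∀ σ : Equiv.Perm (Fin m),
      ∫⁻ x, {y : Fin m → ℝ | StrictAnti (y ∘ σ)}.indicator f x
          ∂(Measure.pi fun _ : Fin m => μ)
      = ∫⁻ x, {y : Fin m → ℝ | StrictAnti y}.indicator f x
          ∂(Measure.pi fun _ : Fin m => μ) := by
    intro σ
    have hcomp : ∀ x : Fin m → ℝ,
        {y : Fin m → ℝ | StrictAnti (y ∘ σ)}.indicator f x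
        = {y : Fin m → ℝ | StrictAnti y}.indicator f (x ∘ σ) := by
      intro x
      simp only [Set.indicator_apply, Set.mem_setOf_eq, hsym σ x]
    simp_rw [hcomp]
    exact (perm_measurePreserving (μ := μ) m σ).lintegral_comp
      (hf.indicator (measurableSet_strictAnti_chamber (Equiv.refl _))) |>.trans (by
        congr 1)
  simp_rw [hterm]
  rw [Finset.sum_const, Finset.card_univ, Fintype.card_perm, Fintype.card_fin, nsmul_eq_mul]


lemma ofReal_cdf (c : ℝ) : ENNReal.ofReal (cdf' μ c) = μ (Set.Iic c) :=
  ENNReal.ofReal_toReal (measure_ne_top μ _)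

lemma measurableSet_lower {m : ℕ} (c : ℝ) :
    MeasurableSet {s : Fin m → ℝ | ∀ j, s j < c} := by
  have : {s : Fin m → ℝ | ∀ j, s j < c} = ⋂ j, {s | s j < c} := by
    ext s; simp
  rw [this]
  exact MeasurableSet.iInter fun j => measurableSet_lt (measurable_pi_apply j) measurable_const

/-- L8: measure of the strictly decreasing simplex below level `c`. -/
lemma pi_strictAnti_lower (m : ℕ) (c : ℝ) :
    (Measure.pi fun _ : Fin m => μ) {s | StrictAnti s ∧ ∀ j, s j < c}
      = μ (Set.Iic c) ^ m / m.factorial := by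
  classical
  set f : (Fin m → ℝ) → ℝ≥0∞ := {s : Fin m → ℝ | ∀ j, s j < c}.indicator 1 with hfdef
  have hf : Measurable f := (measurable_const.indicator (measurableSet_lower c))
  have hsym : ∀ (σ : Equiv.Perm (Fin m)) (x : Fin m → ℝ), f (x ∘ σ) = f x := by
    intro σ x
    have : (∀ j, (x ∘ σ) j < c) ↔ (∀ j, x j < c) :=
      ⟨fun hx j => by simpa using hx (σ.symm j), fun hx j => hx _⟩
    simp only [hfdef, Set.indicator_apply, Set.mem_setOf_eq, this, Pi.one_apply]
  have key := lintegral_eq_factorial_mul_strictAnti (μ := μ) m f hf hsym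
  have hL : ∫⁻ x, f x ∂(Measure.pi fun _ : Fin m => μ) = μ (Set.Iic c) ^ m := by
    rw [hfdef, lintegral_indicator (measurableSet_lower c)]
    simp only [Pi.one_apply, lintegral_one, Measure.restrict_apply MeasurableSet.univ,
      Set.univ_inter]
    have : {s : Fin m → ℝ | ∀ j, s j < c} = Set.pi Set.univ fun _ => Set.Iio c := by
      ext s; simp [Set.mem_pi]
    rw [this, Measure.pi_pi]
    have hIio : μ (Set.Iio c) = μ (Set.Iic c) := measure_congr Iio_ae_eq_Iic
    simp [hIio, Finset.prod_const]
  have hR : ∫⁻ x, {y : Fin m → ℝ | StrictAnti y}.indicator f x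
      ∂(Measure.pi fun _ : Fin m => μ)
      = (Measure.pi fun _ : Fin m => μ) {s | StrictAnti s ∧ ∀ j, s j < c} := by
    have : {y : Fin m → ℝ | StrictAnti y}.indicator f
        = {s : Fin m → ℝ | StrictAnti s ∧ ∀ j, s j < c}.indicator 1 := by
      funext s
      simp only [hfdef, Set.indicator_apply, Set.mem_setOf_eq]
      by_cases h1 : StrictAnti s <;> by_cases h2 : ∀ j, s j < c <;> simp [h1, h2]
    rw [this, lintegral_indicator]
    · simp
    · have hmeas : MeasurableSet {s : Fin m → ℝ | StrictAnti s} := by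
        have := measurableSet_strictAnti_chamber (m := m) (Equiv.refl _)
        simpa using this
      have : {s : Fin m → ℝ | StrictAnti s ∧ ∀ j, s j < c}
          = {s : Fin m → ℝ | StrictAnti s} ∩ {s | ∀ j, s j < c} := rfl
      rw [this]
      exact hmeas.inter (measurableSet_lower c)
  rw [hL, hR] at key
  rw [key, mul_div_assoc, ENNReal.mul_div_cancel (by exact_mod_cast m.factorial_pos.ne')
    (ENNReal.natCast_ne_top _)]

section split
variable {N n : ℕ}

/-- The index splitting equivalence. -/
def e0 (h : N ≤ n) : (Fin N ⊕ Fin (n - N)) ≃ Fin n :=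
  finSumFinEquiv.trans (finCongr (by omega))

lemma e0_inl (h : N ≤ n) (i : Fin N) : ((e0 h (Sum.inl i) : Fin n) : ℕ) = (i : ℕ) := by
  simp [e0]

lemma e0_inr (h : N ≤ n) (j : Fin (n - N)) : ((e0 h (Sum.inr j) : Fin n) : ℕ) = N + (j : ℕ) := by
  simp [e0]

/-- Joining a pair of tuples into a long tuple. -/
def joinF (h : N ≤ n) : (Fin N → ℝ) × (Fin (n - N) → ℝ) → (Fin n → ℝ) :=
  fun p => Sum.elim p.1 p.2 ∘ (e0 h).symm

lemma joinF_apply_lt (h : N ≤ n) (p : (Fin N → ℝ) × (Fin (n - N) → ℝ)) (k : Fin n)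
    (hk : (k : ℕ) < N) : joinF h p k = p.1 ⟨(k : ℕ), hk⟩ := by
  have hsymm : (e0 h).symm k = Sum.inl ⟨(k : ℕ), hk⟩ := by
    rw [Equiv.symm_apply_eq]
    ext
    rw [e0_inl]
  simp [joinF, hsymm]

lemma joinF_apply_ge (h : N ≤ n) (p : (Fin N → ℝ) × (Fin (n - N) → ℝ)) (k : Fin n)
    (hk : N ≤ (k : ℕ)) : joinF h p k = p.2 ⟨(k : ℕ) - N, by omega⟩ := by
  have hsymm : (e0 h).symm k = Sum.inr ⟨(k : ℕ) - N, by omega⟩ := by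
    rw [Equiv.symm_apply_eq]
    ext
    rw [e0_inr]
    simp only [Fin.val_mk]
    omega
  simp [joinF, hsymm]

lemma measurable_joinF (h : N ≤ n) : Measurable (joinF h) := by
  rw [measurable_pi_iff]
  intro k
  rcases lt_or_ge (k : ℕ) N with hk | hk
  · simp_rw [fun p => joinF_apply_lt h p k hk]
    exact (measurable_pi_apply _).comp measurable_fst
  · simp_rw [fun p => joinF_apply_ge h p k hk]
    exact (measurable_pi_apply _).comp measurable_snd

lemma measurePreserving_joinF (h : N ≤ n) :
    MeasurePreserving (joinF h)
      ((Measure.pi fun _ : Fin N => μ).prod (Measure.pi fun _ : Fin (n - N) => μ))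
      (Measure.pi fun _ : Fin n => μ) := by
  have h1 := measurePreserving_sumPiEquivProdPi_symm
    (fun _ : Fin N ⊕ Fin (n - N) => μ)
  have h2 := measurePreserving_piCongrLeft (fun _ : Fin n => μ) (e0 h)
  have := h2.comp h1
  convert this using 1
  funext p
  funext k
  simp [joinF, MeasurableEquiv.piCongrLeft, Equiv.piCongrLeft, Equiv.piCongrLeft',
    MeasurableEquiv.sumPiEquivProdPi, Equiv.sumPiEquivProdPi]
  rcases hs : (e0 h).symm k with i | j <;> simp [hs]

lemma strictAnti_joinF_iff (hN : 1 ≤ N) (h : N ≤ n) (t : Fin N → ℝ) (s : Fin (n - N) → ℝ) :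
    StrictAnti (joinF h (t, s)) ↔
      StrictAnti t ∧ (StrictAnti s ∧ ∀ j, s j < t ⟨N - 1, Nat.sub_lt_self Nat.one_pos hN⟩) := by
  have hNn : N - 1 < n := by omega
  constructor
  · intro hx
    refine ⟨?_, ?_, ?_⟩
    · intro a b hab
      have h1 := joinF_apply_lt h (t, s) ⟨(a : ℕ), by omega⟩ a.isLt
      have h2 := joinF_apply_lt h (t, s) ⟨(b : ℕ), by omega⟩ b.isLt
      simp only [Fin.eta] at h1 h2
      rw [← h1, ← h2]
      refine hx ?_
      rw [Fin.lt_def]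
      simp only [Fin.val_mk]
      exact (Fin.lt_def).mp hab
    · intro a b hab
      have h1 := joinF_apply_ge h (t, s) ⟨N + (a : ℕ), by omega⟩
        (by simp only [Fin.val_mk]; omega)
      have h2 := joinF_apply_ge h (t, s) ⟨N + (b : ℕ), by omega⟩
        (by simp only [Fin.val_mk]; omega)
      simp only [Fin.val_mk, Nat.add_sub_cancel_left, Fin.eta] at h1 h2
      rw [← h1, ← h2]
      refine hx ?_
      rw [Fin.lt_def]
      simp only [Fin.val_mk]
      have := (Fin.lt_def).mp hab
      omega
    · intro j
      have h1 := joinF_apply_ge h (t, s) ⟨N + (j : ℕ), by omega⟩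
        (by simp only [Fin.val_mk]; omega)
      have h2 := joinF_apply_lt h (t, s) ⟨N - 1, hNn⟩ (by simp only [Fin.val_mk]; omega)
      simp only [Fin.val_mk, Nat.add_sub_cancel_left, Fin.eta] at h1 h2
      rw [← h1, ← h2]
      refine hx ?_
      rw [Fin.lt_def]
      simp only [Fin.val_mk]
      omega
  · rintro ⟨h1, h2, h3⟩
    intro a b hab
    have habv := (Fin.lt_def).mp hab
    rcases lt_or_ge (b : ℕ) N with hb | hb
    · have ha : (a : ℕ) < N := by omega
      rw [joinF_apply_lt h _ a ha, joinF_apply_lt h _ b hb]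
      refine h1 ?_
      rw [Fin.lt_def]
      simp only [Fin.val_mk]
      exact habv
    · rcases lt_or_ge (a : ℕ) N with ha | ha
      · rw [joinF_apply_lt h _ a ha, joinF_apply_ge h _ b hb]
        calc s ⟨(b : ℕ) - N, by omega⟩ < t ⟨N - 1, by omega⟩ := h3 _
          _ ≤ t ⟨(a : ℕ), ha⟩ := by
            refine h1.antitone ?_
            rw [Fin.le_def]
            simp only [Fin.val_mk]
            omega
      · rw [joinF_apply_ge h _ a ha, joinF_apply_ge h _ b hb]
        refine h2 ?_
        rw [Fin.lt_def]
        simp only [Fin.val_mk]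
        omega

end split

lemma measurableSet_strictAnti_lower {m : ℕ} (c : ℝ) :
    MeasurableSet {s : Fin m → ℝ | StrictAnti s ∧ ∀ j, s j < c} := by
  have hmeas : MeasurableSet {s : Fin m → ℝ | StrictAnti s} := by
    have := measurableSet_strictAnti_chamber (m := m) (Equiv.refl _)
    simpa using this
  exact hmeas.inter (measurableSet_lower c)

lemma key_fubini {N n : ℕ} (hN : 1 ≤ N) (h : N ≤ n) (g : (Fin N → ℝ) → ℝ≥0∞)
    (hg : Measurable g) :
    ∫⁻ x, {y : Fin n → ℝ | StrictAnti y}.indicator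
        (fun x => g (fun i : Fin N => x ⟨(i : ℕ), lt_of_lt_of_le i.isLt h⟩)) x
        ∂(Measure.pi fun _ : Fin n => μ)
      = ∫⁻ t, {y : Fin N → ℝ | StrictAnti y}.indicator
          (fun t => g t * (μ (Set.Iic (t ⟨N - 1, Nat.sub_lt_self Nat.one_pos hN⟩)) ^ (n - N) / (n - N).factorial)) t
          ∂(Measure.pi fun _ : Fin N => μ) := by
  have hNn : N - 1 < N := by omega
  set f : (Fin n → ℝ) → ℝ≥0∞ := {y : Fin n → ℝ | StrictAnti y}.indicator
    (fun x => g (fun i : Fin N => x ⟨(i : ℕ), lt_of_lt_of_le i.isLt h⟩)) with hfdef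
  have hfirst_m : Measurable fun x : Fin n → ℝ =>
      (fun i : Fin N => x ⟨(i : ℕ), lt_of_lt_of_le i.isLt h⟩) := by
    rw [measurable_pi_iff]; intro i; exact measurable_pi_apply _
  have hfm : Measurable f := (hg.comp hfirst_m).indicator
    (by simpa using measurableSet_strictAnti_chamber (m := n) (Equiv.refl _))
  calc ∫⁻ x, f x ∂(Measure.pi fun _ : Fin n => μ)
      = ∫⁻ p, f (joinF h p)
          ∂((Measure.pi fun _ : Fin N => μ).prod (Measure.pi fun _ : Fin (n - N) => μ)) :=
        ((measurePreserving_joinF (μ := μ) h).lintegral_comp hfm).symm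
    _ = ∫⁻ t, ∫⁻ s, f (joinF h (t, s)) ∂(Measure.pi fun _ : Fin (n - N) => μ)
          ∂(Measure.pi fun _ : Fin N => μ) := by
        exact lintegral_prod (fun p => f (joinF h p)) ((hfm.comp (measurable_joinF h)).aemeasurable)
    _ = ∫⁻ t, {y : Fin N → ℝ | StrictAnti y}.indicator
          (fun t => g t * (μ (Set.Iic (t ⟨N - 1, Nat.sub_lt_self Nat.one_pos hN⟩)) ^ (n - N) / (n - N).factorial)) t
          ∂(Measure.pi fun _ : Fin N => μ) := by
        apply lintegral_congr
        intro t
        have hinner : ∀ s : Fin (n - N) → ℝ, f (joinF h (t, s))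
            = {s' : Fin (n - N) → ℝ | StrictAnti s' ∧ ∀ j, s' j < t ⟨N - 1, hNn⟩}.indicator
                (fun _ => if StrictAnti t then g t else 0) s := by
          intro s
          have hfirst : (fun i : Fin N => joinF h (t, s) ⟨(i : ℕ), lt_of_lt_of_le i.isLt h⟩)
              = t := by
            funext i
            rw [joinF_apply_lt h (t, s) ⟨(i : ℕ), lt_of_lt_of_le i.isLt h⟩
              (by simp only [Fin.val_mk]; exact i.isLt)]
          rw [hfdef]
          simp only [Set.indicator_apply, Set.mem_setOf_eq, hfirst]
          by_cases h1 : StrictAnti t <;>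
            by_cases h2 : StrictAnti s ∧ ∀ j, s j < t ⟨N - 1, hNn⟩ <;>
            simp [strictAnti_joinF_iff hN h, h1, h2]
        simp_rw [hinner]
        rw [lintegral_indicator_const (measurableSet_strictAnti_lower _)]
        rw [pi_strictAnti_lower (μ := μ)]
        simp only [Set.indicator_apply, Set.mem_setOf_eq]
        by_cases h1 : StrictAnti t <;> simp [h1]


section main
variable {μ : Measure ℝ} [IsProbabilityMeasure μ] [NullSingletonClass μ]

lemma cdf'_nonneg (c : ℝ) : 0 ≤ cdf' μ c := ENNReal.toReal_nonneg

lemma density_calc (n m : ℕ) (c : ℝ) :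
    (n.factorial : ℝ≥0∞) * (μ (Set.Iic c) ^ m / m.factorial)
      = ENNReal.ofReal ((n.factorial : ℝ) / (m.factorial : ℝ) * cdf' μ c ^ m) := by
  rw [ENNReal.ofReal_mul (by positivity), ENNReal.ofReal_div_of_pos (by positivity),
    ENNReal.ofReal_natCast, ENNReal.ofReal_natCast,
    ENNReal.ofReal_pow (cdf'_nonneg (μ := μ) c), ofReal_cdf]
  rw [div_eq_mul_inv, div_eq_mul_inv]
  ring

end main

/-- **Density of the order statistics.**
If `μ` is an atomless probability measure on `ℝ` with distribution function `F` and
`1 ≤ N ≤ n`, the pushforward of `μ^⊗n` by `maxN` is absolutely continuous with respect to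
`μ^⊗N`, with density `(t_1,…,t_N) ↦ (n!/(n-N)!) 1_{t_1 ≥ ⋯ ≥ t_N} F(t_N)^(n-N)`. -/
theorem map_maxN_pi_eq_withDensity (μ : Measure ℝ) [IsProbabilityMeasure μ] [NullSingletonClass μ]
    (N n : ℕ) (hN : 1 ≤ N) (h : N ≤ n) :
    (Measure.pi fun _ : Fin n => μ).map (maxN N n h) =
      (Measure.pi fun _ : Fin N => μ).withDensity fun t =>
        ENNReal.ofReal
          (if Antitone t then
            ((n.factorial : ℝ) / ((n - N).factorial : ℝ)) *
              cdf' μ (t ⟨N - 1, by omega⟩) ^ (n - N)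
          else 0) := by
  have hNn : N - 1 < N := by omega
  ext s hs
  rw [Measure.map_apply (measurable_maxN h) hs, withDensity_apply _ hs]
  set g : (Fin N → ℝ) → ℝ≥0∞ := s.indicator (fun _ => 1) with hg
  have hgm : Measurable g := measurable_const.indicator hs
  have hL1 : (Measure.pi fun _ : Fin n => μ) (maxN N n h ⁻¹' s)
      = ∫⁻ x, g (maxN N n h x) ∂(Measure.pi fun _ : Fin n => μ) := by
    rw [← lintegral_indicator_one ((measurable_maxN h) hs)]
    apply lintegral_congr
    intro x
    by_cases hx : maxN N n h x ∈ s <;> simp [hx, hg]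
  rw [hL1]
  rw [lintegral_eq_factorial_mul_strictAnti (μ := μ) n (fun x => g (maxN N n h x))
    (hgm.comp (measurable_maxN h)) (fun σ x => congrArg g (maxN_comp_perm h x σ))]
  have hind : {y : Fin n → ℝ | StrictAnti y}.indicator (fun x => g (maxN N n h x))
      = {y : Fin n → ℝ | StrictAnti y}.indicator
          (fun x => g (fun i : Fin N => x ⟨(i : ℕ), lt_of_lt_of_le i.isLt h⟩)) := by
    funext x
    simp only [Set.indicator_apply, Set.mem_setOf_eq]
    by_cases hx : StrictAnti x
    · simp only [hx, if_true]
      congr 1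
      funext i
      exact maxN_of_strictAnti h hx i
    · simp [hx]
  rw [hind, key_fubini (μ := μ) hN h g hgm]
  rw [← lintegral_indicator hs]
  have hmono : Measurable fun c : ℝ => μ (Set.Iic c) := by
    have : Monotone fun c : ℝ => μ (Set.Iic c) := fun a b hab =>
      measure_mono (Set.Iic_subset_Iic.mpr hab)
    exact this.measurable
  have hconst_m : Measurable fun t : Fin N → ℝ =>
      μ (Set.Iic (t ⟨N - 1, hNn⟩)) ^ (n - N) / (n - N).factorial := by
    apply Measurable.div _ measurable_const
    exact (hmono.comp (measurable_pi_apply _)).pow measurable_const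
  rw [← lintegral_const_mul (n.factorial : ℝ≥0∞)
    ((show Measurable fun t : Fin N → ℝ =>
      g t * (μ (Set.Iic (t ⟨N - 1, hNn⟩)) ^ (n - N) / (n - N).factorial) from hgm.mul hconst_m).indicator
      (by simpa using measurableSet_strictAnti_chamber (m := N) (Equiv.refl _)))]
  apply lintegral_congr_ae
  filter_upwards [ae_injective_pi (μ := μ) N] with t ht
  by_cases hanti : StrictAnti t
  · have hA : Antitone t := hanti.antitone
    rw [Set.indicator_of_mem (show t ∈ {y : Fin N → ℝ | StrictAnti y} from hanti)]
    by_cases hts : t ∈ s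
    · rw [hg]
      rw [Set.indicator_of_mem hts, Set.indicator_of_mem hts, if_pos hA, one_mul]
      exact density_calc n (n - N) _
    · rw [hg, Set.indicator_of_notMem hts, Set.indicator_of_notMem hts, zero_mul, mul_zero]
  · have hA : ¬ Antitone t := fun hA => hanti (hA.strictAnti_of_injective ht)
    rw [Set.indicator_of_notMem (show t ∉ {y : Fin N → ℝ | StrictAnti y} from hanti), mul_zero]
    by_cases hts : t ∈ s
    · rw [Set.indicator_of_mem hts, if_neg hA, ENNReal.ofReal_zero]
    · rw [Set.indicator_of_notMem hts]
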